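/- Let C be a braided monoidal category in which every object has a right dual, and let J be a class of objects of C that is closed under retracts (if Y ∈ J and X is a retract of Y then X ∈ J) and closed under tensoring with arbitrary objects on either side (if Y ∈ J then Y ⊗ X ∈ J and X ⊗ Y ∈ J for every object X). If M is an object of C such that the n-th tensor power M^{⊗n} belongs to J for some n ≥ 1, then M belongs to J. -/

import Mathlib

set_option linter.unusedSectionVars false
set_option linter.unusedVariables false

open CategoryTheory MonoidalCategory

attribute [local instance] BraidedCategory.hasLeftDualOfHasRightDual

/-- The `n`-th tensor power of an object in a monoidal category,
with `M^{⊗0} = 𝟙` and `M^{⊗(n+1)} = M^{⊗n} ⊗ M`. -/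
def tensorPowObj {C : Type*} [Category C] [MonoidalCategory C] (M : C) : ℕ → C
  | 0 => 𝟙_ C
  | n + 1 => tensorPowObj M n ⊗ M

section aux

variable {C : Type*} [Category C] [MonoidalCategory C]

/-- Retract relation. -/
def IsRetract (X Y : C) : Prop := ∃ (i : X ⟶ Y) (r : Y ⟶ X), i ≫ r = 𝟙 X

theorem isRetract_of_iso {X Y : C} (e : X ≅ Y) : IsRetract X Y :=
  ⟨e.hom, e.inv, e.hom_inv_id⟩

theorem isRetract_trans {X Y Z : C} (h1 : IsRetract X Y) (h2 : IsRetract Y Z) :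
    IsRetract X Z := by
  obtain ⟨i, r, hir⟩ := h1
  obtain ⟨j, s, hjs⟩ := h2
  exact ⟨i ≫ j, s ≫ r, by rw [Category.assoc, ← Category.assoc j, hjs, Category.id_comp, hir]⟩

theorem isRetract_whiskerRight {X Y : C} (Z : C) (h : IsRetract X Y) :
    IsRetract (X ⊗ Z) (Y ⊗ Z) := by
  obtain ⟨i, r, hir⟩ := h
  exact ⟨i ▷ Z, r ▷ Z, by rw [← comp_whiskerRight, hir, id_whiskerRight]⟩

/-- `M` is a retract of `M ⊗ (ᘁM ⊗ M)` whenever `(L, M)` is an exact pairing. -/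
theorem sandwich_retract [BraidedCategory C] [RightRigidCategory C] (M : C) :
    IsRetract M (M ⊗ ((ᘁM) ⊗ M)) := by
  refine ⟨(ρ_ M).inv ≫ M ◁ η_ (ᘁM) M,
    (α_ M (ᘁM) M).inv ≫ ε_ (ᘁM) M ▷ M ≫ (λ_ M).hom, ?_⟩
  simp only [Category.assoc]
  rw [ExactPairing.coevaluation_evaluation_assoc]
  simp

end aux

/-- In a braided monoidal category in which every object has a right dual, if a class of
objects `J` is closed under retracts and under tensoring with arbitrary objects on either
side, and some tensor power `M^{⊗n}` with `n ≥ 1` belongs to `J`, then `M` belongs to `J`. -/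
theorem stmt1 {C : Type*} [Category C] [MonoidalCategory C] [BraidedCategory C]
    [RightRigidCategory C] (J : Set C)
    (hretract : ∀ X Y : C, (∃ (i : X ⟶ Y) (r : Y ⟶ X), i ≫ r = 𝟙 X) → Y ∈ J → X ∈ J)
    (htensor_right : ∀ X Y : C, Y ∈ J → (Y ⊗ X) ∈ J)
    (htensor_left : ∀ X Y : C, Y ∈ J → (X ⊗ Y) ∈ J)
    (M : C) (n : ℕ) (hn : 1 ≤ n) (h : tensorPowObj M n ∈ J) : M ∈ J := by
  -- main claim: for all k ≥ 1 there is W with M a retract of W ⊗ M^{⊗k}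
  have key : ∀ k : ℕ, 1 ≤ k → ∃ W : C, IsRetract M (W ⊗ tensorPowObj M k) := by
    intro k hk
    induction k with
    | zero => omega
    | succ k ih =>
      rcases Nat.eq_or_lt_of_le hk with h1 | h1
      · -- k + 1 = 1
        have : k = 0 := by omega
        subst this
        refine ⟨𝟙_ C, ?_⟩
        simp only [tensorPowObj]
        exact isRetract_of_iso ((λ_ M).symm ≪≫ (λ_ (𝟙_ C ⊗ M)).symm)
      · obtain ⟨W, hW⟩ := ih (by omega)
        refine ⟨W ⊗ ᘁM, ?_⟩
        have h2 : IsRetract M (M ⊗ ((ᘁM) ⊗ M)) := sandwich_retract M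
        have h3 : IsRetract (M ⊗ ((ᘁM) ⊗ M)) ((W ⊗ tensorPowObj M k) ⊗ ((ᘁM) ⊗ M)) :=
          isRetract_whiskerRight _ hW
        have h4 : IsRetract ((W ⊗ tensorPowObj M k) ⊗ ((ᘁM) ⊗ M))
            ((W ⊗ ᘁM) ⊗ tensorPowObj M (k + 1)) := by
          apply isRetract_of_iso
          show (W ⊗ tensorPowObj M k) ⊗ ((ᘁM) ⊗ M) ≅ (W ⊗ ᘁM) ⊗ (tensorPowObj M k ⊗ M)
          exact (α_ _ _ _).symm ≪≫
            whiskerRightIso ((α_ W (tensorPowObj M k) (ᘁM)) ≪≫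
              whiskerLeftIso W (β_ (tensorPowObj M k) (ᘁM)) ≪≫ (α_ W (ᘁM) _).symm) M ≪≫
            α_ _ _ _
        exact isRetract_trans (isRetract_trans h2 h3) h4
  obtain ⟨W, hW⟩ := key n hn
  exact hretract M _ hW (htensor_left _ _ h)
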